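/- If X ⊆ ℝ has positive outer Lebesgue measure and f : X → ℝ is continuous (for the subspace topology on X) and injective, then the image f[X] is not universally negligible. In particular, every universally negligible subset of ℝ is Lebesgue null. -/
import Mathlib


open MeasureTheory

/-- A set `Z ⊆ ℝ` (with the subspace topology, whose Borel σ-algebra is the trace
σ-algebra) is universally negligible if there is no Borel probability measure on `Z`
vanishing on all singletons. -/
def UniversallyNegligible (Z : Set ℝ) : Prop :=
  ¬ ∃ μ : Measure Z, IsProbabilityMeasure μ ∧ ∀ z : Z, μ {z} = 0

private theorem aux_atomless_measure (X : Set ℝ) (f : X → ℝ) (hX : 0 < volume X)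
    (hf : Continuous f) (hinj : Function.Injective f) :
    ∃ μ : Measure (Set.range f), IsProbabilityMeasure μ ∧ ∀ z : Set.range f, μ {z} = 0 := by
  -- choose n with positive outer measure on a bounded piece
  have hXun : X ⊆ ⋃ n : ℕ, X ∩ Set.Icc (-(n:ℝ)) n := by
    intro x hx
    obtain ⟨n, hn⟩ := exists_nat_ge |x|
    exact Set.mem_iUnion.2
      ⟨n, hx, by constructor <;> [linarith [neg_abs_le x]; linarith [le_abs_self x]]⟩
  have hex : ∃ n : ℕ, volume (X ∩ Set.Icc (-(n:ℝ)) n) ≠ 0 := by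
    by_contra h; push_neg at h
    have h0 : volume X = 0 :=
      measure_mono_null hXun (measure_iUnion_null fun n => h n)
    rw [h0] at hX; exact lt_irrefl _ hX
  obtain ⟨n, hn⟩ := hex
  set X' := X ∩ Set.Icc (-(n:ℝ)) n with hX'def
  set H := toMeasurable volume X' with hHdef
  have hHmeas : MeasurableSet H := measurableSet_toMeasurable _ _
  set μ₀ := volume.restrict H with hμ₀def
  set φ : X → Set.range f := fun x => ⟨f x, Set.mem_range_self x⟩ with hφdef
  have hφmeas : Measurable φ := hf.measurable.subtype_mk
  set ν : OuterMeasure (Set.range f) :=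
    OuterMeasure.map φ (OuterMeasure.comap Subtype.val μ₀.toOuterMeasure) with hνdef
  have hν : ∀ s, ν s = μ₀ (Subtype.val '' (φ ⁻¹' s)) := by
    intro s
    rw [hνdef, OuterMeasure.map_apply, OuterMeasure.comap_apply, Measure.coe_toOuterMeasure]
  have hcar : (inferInstance : MeasurableSpace (Set.range f)) ≤ ν.caratheodory := by
    intro S hS
    rw [OuterMeasure.isCaratheodory_iff]
    intro t
    obtain ⟨B, hB, hBeq⟩ : ∃ B, MeasurableSet B ∧ Subtype.val ⁻¹' B = φ ⁻¹' S := hφmeas hS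
    have h1 : φ ⁻¹' (t ∩ S) = φ ⁻¹' t ∩ Subtype.val ⁻¹' B := by rw [Set.preimage_inter, hBeq]
    have h2 : φ ⁻¹' (t \ S) = φ ⁻¹' t \ Subtype.val ⁻¹' B := by rw [Set.preimage_diff, hBeq]
    rw [hν, hν, hν, h1, h2, Set.image_inter_preimage, Set.image_diff_preimage,
      measure_inter_add_diff _ hB]
  set m := ν.toMeasure hcar with hmdef
  -- total mass
  have hνuniv : ν Set.univ = volume (X ∩ H) := by
    rw [hν, Set.preimage_univ, Subtype.coe_image_univ, hμ₀def,
      Measure.restrict_apply' hHmeas]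
  have hmuniv : m Set.univ = volume (X ∩ H) := by
    rw [hmdef, toMeasure_apply ν hcar MeasurableSet.univ, hνuniv]
  have hpos : 0 < m Set.univ := by
    rw [hmuniv]
    refine lt_of_lt_of_le (pos_iff_ne_zero.2 hn) (measure_mono ?_)
    exact Set.subset_inter Set.inter_subset_left (subset_toMeasurable _ _)
  have hfin : m Set.univ < ⊤ := by
    rw [hmuniv]
    calc volume (X ∩ H) ≤ volume H := measure_mono Set.inter_subset_right
      _ = volume X' := measure_toMeasurable _
      _ ≤ volume (Set.Icc (-(n:ℝ)) n) := measure_mono Set.inter_subset_right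
      _ < ⊤ := measure_Icc_lt_top
  -- singletons
  have hsing : ∀ z : Set.range f, m {z} = 0 := by
    intro z
    rw [hmdef, toMeasure_apply ν hcar (measurableSet_singleton z), hν]
    obtain ⟨x₀, hx₀⟩ := z.2
    have hsub : Subtype.val '' (φ ⁻¹' {z}) ⊆ {(x₀ : ℝ)} := by
      rintro _ ⟨x, hx, rfl⟩
      have : f x = f x₀ := by
        have : φ x = z := hx
        rw [Subtype.ext_iff] at this
        simp only [hφdef] at this
        rw [this, hx₀]
      have := hinj this
      simp [this]
    refine measure_mono_null hsub ?_
    rw [hμ₀def, Measure.restrict_apply' hHmeas]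
    exact measure_mono_null Set.inter_subset_left (measure_singleton _)
  refine ⟨(m Set.univ)⁻¹ • m, ⟨?_⟩, ?_⟩
  · rw [Measure.smul_apply, smul_eq_mul, ENNReal.inv_mul_cancel hpos.ne' hfin.ne]
  · intro z
    rw [Measure.smul_apply, hsing z, smul_eq_mul, mul_zero]

/-- a continuous injective image of a set of positive outer Lebesgue
measure is not universally negligible; in particular, universally negligible subsets
of `ℝ` are Lebesgue null. -/
theorem continuous_injective_image_not_universallyNegligible :
    (∀ (X : Set ℝ) (f : X → ℝ), 0 < volume X → Continuous f → Function.Injective f →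
      ¬ UniversallyNegligible (Set.range f)) ∧
    (∀ Z : Set ℝ, UniversallyNegligible Z → volume Z = 0) := by
  have main : ∀ (X : Set ℝ) (f : X → ℝ), 0 < volume X → Continuous f → Function.Injective f →
      ¬ UniversallyNegligible (Set.range f) := by
    intro X f hX hf hinj hUN
    exact hUN (aux_atomless_measure X f hX hf hinj)
  refine ⟨main, fun Z hZ => ?_⟩
  by_contra h
  have hpos : 0 < volume Z := pos_iff_ne_zero.2 h
  have := main Z Subtype.val hpos continuous_subtype_val Subtype.val_injective
  rw [Subtype.range_coe] at this
  exact this hZ
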